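/- For every integer k ≥ 1, with a = −(12k² + 24k + 11), b = 4(k+1)²(3k+2)(3k+4), x₀ = 2(k+1)(3k+2), x₁ = 2(k+1)(3k+4), the following identity holds in the group of rational points of the Weierstrass curve C_k : y² = x³ + a·x² + b·x over ℚ (with the point at infinity as identity): (0, 0) + (x₁, x₁) = (x₀, −x₀). -/

import Mathlib

/-- The "pentagonal" Weierstrass curve `y² = x³ + a x² + b x` over `ℚ`, where
`a = -(12k² + 24k + 11)` and `b = 4(k+1)²(3k+2)(3k+4)` (Notation 6.3 of the paper). -/
def pentagonCurve (k : ℤ) : WeierstrassCurve.Affine ℚ :=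
  { a₁ := 0
    a₂ := -(12 * (k : ℚ) ^ 2 + 24 * (k : ℚ) + 11)
    a₃ := 0
    a₄ := 4 * ((k : ℚ) + 1) ^ 2 * (3 * (k : ℚ) + 2) * (3 * (k : ℚ) + 4)
    a₆ := 0 }

/-- `x₀ = 2(k+1)(3k+2)`. -/
def pentagonX₀ (k : ℤ) : ℚ := 2 * ((k : ℚ) + 1) * (3 * (k : ℚ) + 2)

/-- `x₁ = 2(k+1)(3k+4)`. -/
def pentagonX₁ (k : ℤ) : ℚ := 2 * ((k : ℚ) + 1) * (3 * (k : ℚ) + 4)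

/-- For every integer `k ≥ 1`, in the group of rational points of the pentagonal curve one has
`(0, 0) + (x₁, x₁) = (x₀, -x₀)` (the divisor relation `d₁ + d₂ ∼ d₄ + d₅` of Lemma 6.4(i)). -/
theorem pentagonCurve_add_eq (k : ℤ) (hk : 1 ≤ k) :
    ∃ (h₄ : (pentagonCurve k).Nonsingular 0 0)
      (h₅ : (pentagonCurve k).Nonsingular (pentagonX₁ k) (pentagonX₁ k))
      (h₂ : (pentagonCurve k).Nonsingular (pentagonX₀ k) (-pentagonX₀ k)),
      WeierstrassCurve.Affine.Point.some _ _ h₄ + WeierstrassCurve.Affine.Point.some _ _ h₅ =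
        WeierstrassCurve.Affine.Point.some _ _ h₂ := by
  have hkq : (1 : ℚ) ≤ (k : ℚ) := by exact_mod_cast hk
  have hkpos : (0 : ℚ) < (k : ℚ) + 1 := by linarith
  have h32 : (0 : ℚ) < 3 * (k : ℚ) + 2 := by linarith
  have h34 : (0 : ℚ) < 3 * (k : ℚ) + 4 := by linarith
  have hx0 : pentagonX₀ k ≠ 0 := by unfold pentagonX₀; positivity
  have hx1 : pentagonX₁ k ≠ 0 := by unfold pentagonX₁; positivity
  have h₄ : (pentagonCurve k).Nonsingular 0 0 := by
    rw [WeierstrassCurve.Affine.nonsingular_iff]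
    refine ⟨by simp [WeierstrassCurve.Affine.equation_iff, pentagonCurve], Or.inl ?_⟩
    simp only [pentagonCurve]
    ring_nf
    positivity
  have h₅ : (pentagonCurve k).Nonsingular (pentagonX₁ k) (pentagonX₁ k) := by
    rw [WeierstrassCurve.Affine.nonsingular_iff]
    refine ⟨?_, Or.inr ?_⟩
    · simp only [WeierstrassCurve.Affine.equation_iff, pentagonCurve, pentagonX₁]; ring
    · simp only [WeierstrassCurve.Affine.negY, pentagonCurve]
      intro h
      apply hx1
      linarith [h]
  have h₂ : (pentagonCurve k).Nonsingular (pentagonX₀ k) (-pentagonX₀ k) := by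
    rw [WeierstrassCurve.Affine.nonsingular_iff]
    refine ⟨?_, Or.inr ?_⟩
    · simp only [WeierstrassCurve.Affine.equation_iff, pentagonCurve, pentagonX₀]; ring
    · simp only [WeierstrassCurve.Affine.negY, pentagonCurve]
      intro h
      apply hx0
      linarith [h]
  refine ⟨h₄, h₅, h₂, ?_⟩
  have hxne : (0 : ℚ) ≠ pentagonX₁ k := fun h => hx1 h.symm
  rw [WeierstrassCurve.Affine.Point.add_of_X_ne hxne]
  have hslope : (pentagonCurve k).slope 0 (pentagonX₁ k) 0 (pentagonX₁ k) = 1 := by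
    rw [WeierstrassCurve.Affine.slope_of_X_ne hxne]
    field_simp
  have haX : (pentagonCurve k).addX 0 (pentagonX₁ k)
      ((pentagonCurve k).slope 0 (pentagonX₁ k) 0 (pentagonX₁ k)) = pentagonX₀ k := by
    rw [hslope]
    simp only [WeierstrassCurve.Affine.addX, pentagonCurve, pentagonX₀, pentagonX₁]
    ring
  have haY : (pentagonCurve k).addY 0 (pentagonX₁ k) 0
      ((pentagonCurve k).slope 0 (pentagonX₁ k) 0 (pentagonX₁ k)) = -pentagonX₀ k := by
    rw [WeierstrassCurve.Affine.addY, WeierstrassCurve.Affine.negAddY, hslope]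
    simp only [WeierstrassCurve.Affine.negY, WeierstrassCurve.Affine.addX, pentagonCurve,
      pentagonX₀, pentagonX₁]
    ring
  congr 1
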